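/- Define 𝒬 : {(T,X) ∈ ℝ × ℝ⁴ : cos T + X₀ > 0} → ℝ × ℝ³ by 𝒬(T,X) = ((sin T)/(cos T + X₀), (X₁,X₂,X₃)/(cos T + X₀)). Let e₀,…,e₃ be the standard basis of ℝ⁴. Then for every (T,X) with |X| = 1 and cos T + X₀ > 0, writing (t,x) = 𝒬(T,X): (i) for 1 ≤ k ≤ 3, the Fréchet derivative of 𝒬 at (T,X) applied to (0, X₀ e_k − X_k e₀) equals ( t x_k , ((1 + t² − |x|²)/2) e_k + x_k x ), where now e_k denotes the k-th standard basis vector of ℝ³; and (ii) for 1 ≤ j < k ≤ 3, the Fréchet derivative of 𝒬 at (T,X) applied to (0, X_j e_k − X_k e_j) equals (0, x_j e_k − x_k e_j). (This expresses that the rotation field X₀∂_{X_k} − X_k∂_{X₀} on the Einstein cylinder is pushed forward by the inverse Penrose transformation to ½(1+t²−|x|²)∂_{x_k} + x_k(t∂_t + ⟨x,∂_x⟩), and X_j∂_{X_k} − X_k∂_{X_j} to x_j∂_{x_k} − x_k∂_{x_j}.) -/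

import Mathlib

open Real

noncomputable section

abbrev E3 := EuclideanSpace ℝ (Fin 3)
abbrev E4 := EuclideanSpace ℝ (Fin 4)

set_option maxHeartbeats 1000000

/-- The (ambient extension of the) inverse Penrose transformation
`𝒬(T,X) = ((sin T)/(cos T + X₀), X⃗/(cos T + X₀))`. -/
def Qmap : ℝ × E4 → ℝ × E3 := fun p =>
  (Real.sin p.1 / (Real.cos p.1 + p.2 0),
    (EuclideanSpace.equiv (Fin 3) ℝ).symm fun i => p.2 i.succ / (Real.cos p.1 + p.2 0))

/-- **Pushforwards of the rotation fields under the inverse Penrose transformation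
(formulas (2.20), (2.21)).** -/
theorem pushforward_rotations (T : ℝ) (X : E4) (hX : ‖X‖ = 1)
    (h : 0 < Real.cos T + X 0) :
    (∀ k : Fin 3,
      fderiv ℝ Qmap (T, X)
          ((0:ℝ), X 0 • EuclideanSpace.single k.succ (1:ℝ) -
            X k.succ • EuclideanSpace.single (0 : Fin 4) (1:ℝ)) =
        ((Qmap (T, X)).1 * (Qmap (T, X)).2 k,
          ((1 + (Qmap (T, X)).1^2 - ‖(Qmap (T, X)).2‖^2) / 2) •
              EuclideanSpace.single k (1:ℝ) +
            (Qmap (T, X)).2 k • (Qmap (T, X)).2)) ∧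
    ∀ j k : Fin 3, j < k →
      fderiv ℝ Qmap (T, X)
          ((0:ℝ), X j.succ • EuclideanSpace.single k.succ (1:ℝ) -
            X k.succ • EuclideanSpace.single j.succ (1:ℝ)) =
        ((0:ℝ),
          (Qmap (T, X)).2 j • EuclideanSpace.single k (1:ℝ) -
            (Qmap (T, X)).2 k • EuclideanSpace.single j (1:ℝ)) := by
  have hd0 : Real.cos T + X 0 ≠ 0 := ne_of_gt h
  -- sum of squares
  have hsum : X 0 ^ 2 + ∑ i : Fin 3, X i.succ ^ 2 = 1 := by
    have h1 : ‖X‖ ^ 2 = ∑ i : Fin 4, X i ^ 2 := by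
      rw [EuclideanSpace.norm_eq, Real.sq_sqrt (by positivity)]
      simp [sq_abs]
    have h2 : (∑ i : Fin 4, X i ^ 2) = X 0 ^ 2 + ∑ i : Fin 3, X i.succ ^ 2 := by
      rw [Fin.sum_univ_succ]
    rw [hX] at h1
    rw [← h2, ← h1]
    norm_num
  have hnorm2 : ‖(WithLp.equiv 2 (Fin 3 → ℝ)).symm
      (fun i : Fin 3 => X i.succ / (Real.cos T + X 0))‖ ^ 2
      = (1 - X 0 ^ 2) / (Real.cos T + X 0) ^ 2 := by
    rw [EuclideanSpace.norm_eq, Real.sq_sqrt (by positivity)]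
    simp only [WithLp.equiv_symm_apply, PiLp.toLp_apply, Real.norm_eq_abs, sq_abs, div_pow, ← Finset.sum_div]
    rw [show (∑ i : Fin 3, X i.succ ^ 2) = 1 - X 0 ^ 2 by linarith]
  have hkey : (1 + (Real.sin T / (Real.cos T + X 0)) ^ 2
      - (1 - X 0 ^ 2) / (Real.cos T + X 0) ^ 2) / 2 = X 0 / (Real.cos T + X 0) := by
    have hcs := Real.sin_sq_add_cos_sq T
    field_simp
    ring_nf
    nlinarith [hcs]
  -- the derivative
  have hcoord : ∀ i : Fin 4, HasFDerivAt (fun p : ℝ × E4 => p.2 i)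
      ((EuclideanSpace.proj i).comp (ContinuousLinearMap.snd ℝ ℝ E4)) (T, X) := fun i =>
    by
      have := ((EuclideanSpace.proj i : E4 →L[ℝ] ℝ).hasFDerivAt (x := X)).comp (T, X)
        (hasFDerivAt_snd (𝕜 := ℝ) (p := (T, X)))
      exact this
  have hD : HasFDerivAt (fun p : ℝ × E4 => Real.cos p.1 + p.2 0)
      (((-Real.sin T) • ContinuousLinearMap.fst ℝ ℝ E4)
        + (EuclideanSpace.proj (0 : Fin 4)).comp (ContinuousLinearMap.snd ℝ ℝ E4)) (T, X) :=
    by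
      have := ((Real.hasDerivAt_cos T).comp_hasFDerivAt (T, X) (hasFDerivAt_fst (𝕜 := ℝ))).add (hcoord 0)
      exact this
  have hInv : HasFDerivAt (fun p : ℝ × E4 => (Real.cos p.1 + p.2 0)⁻¹)
      ((-((Real.cos T + X 0) ^ 2)⁻¹) •
        (((-Real.sin T) • ContinuousLinearMap.fst ℝ ℝ E4)
        + (EuclideanSpace.proj (0 : Fin 4)).comp (ContinuousLinearMap.snd ℝ ℝ E4))) (T, X) :=
    (hasDerivAt_inv hd0).comp_hasFDerivAt (T, X) hD
  have hN : HasFDerivAt (fun p : ℝ × E4 => Real.sin p.1)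
      ((Real.cos T) • ContinuousLinearMap.fst ℝ ℝ E4) (T, X) :=
    by
      have := (Real.hasDerivAt_sin T).comp_hasFDerivAt (T, X) (hasFDerivAt_fst (𝕜 := ℝ) (p := (T, X)))
      exact this
  have hf := hN.mul hInv
  have hgi := fun i : Fin 3 => (hcoord i.succ).mul hInv
  have hG := hasFDerivAt_pi.mpr hgi
  have hG2 := (((EuclideanSpace.equiv (Fin 3) ℝ).symm).hasFDerivAt).comp (T, X) hG
  have hQ : HasFDerivAt Qmap _ (T, X) := HasFDerivAt.prodMk hf hG2
  rw [hQ.fderiv]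
  constructor
  · intro k
    have hk : (0 : Fin 4) ≠ k.succ := (Fin.succ_ne_zero k).symm
    simp only [Qmap, ContinuousLinearMap.prod_apply]
    simp [hk, Fin.succ_ne_zero]
    constructor
    · field_simp
    · rw [WithLp.equiv_symm_apply] at hnorm2
      rw [hnorm2, hkey]
      ext i
      simp [EuclideanSpace.single_apply, WithLp.equiv_symm_apply, PiLp.toLp_apply]
      rcases eq_or_ne i k with rfl | hik
      · simp
        field_simp
        ring
      · simp [hik]
        field_simp
  · intro j k hjk
    have hj : (0 : Fin 4) ≠ j.succ := (Fin.succ_ne_zero j).symm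
    have hk : (0 : Fin 4) ≠ k.succ := (Fin.succ_ne_zero k).symm
    have hjk' : j.succ ≠ k.succ := by
      simpa using Fin.ne_of_lt hjk
    simp only [Qmap, ContinuousLinearMap.prod_apply]
    simp [hj, hk, Fin.succ_ne_zero, hjk', hjk'.symm]
    ext i
    simp [EuclideanSpace.single_apply, WithLp.equiv_symm_apply, PiLp.toLp_apply]
    rcases eq_or_ne i k with rfl | hik
    · simp [Fin.ne_of_gt hjk]
      ring
    · rcases eq_or_ne i j with rfl | hij
      · simp [hik]
        ring
      · simp [hik, hij]
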